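/- Let A₁,...,A_n be pairwise commuting invertible d×d complex matrices. Then there exists a map v: ℂⁿ → GL_d(ℂ), entire (holomorphic) in z ∈ ℂⁿ, such that v(0) = I, v(eⱼ) = Aⱼ for the standard basis vectors eⱼ, and v(z+z') = v(z)v(z') for all z, z' ∈ ℂⁿ. -/

import Mathlib

open Matrix NormedSpace Polynomial Filter Topology

set_option synthInstance.maxHeartbeats 1000000
set_option maxHeartbeats 2000000

set_option synthInstance.maxHeartbeats 1000000 in
set_option maxHeartbeats 1000000 in
private lemma aux_isUnit_mem {d : ℕ} {S : Subalgebra ℂ (Matrix (Fin d) (Fin d) ℂ)}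
    (hS : ∀ a b : ↥S, a * b = b * a) {x : Matrix (Fin d) (Fin d) ℂ}
    (hx : x ∈ S) (h : IsUnit x) : IsUnit (⟨x, hx⟩ : S) := by
  set p := x.charpoly with hp
  have hdet : IsUnit x.det := (Matrix.isUnit_iff_isUnit_det x).mp h
  have hc : p.coeff 0 ≠ 0 := by
    intro h0
    rw [Matrix.det_eq_sign_charpoly_coeff, ← hp, h0, mul_zero] at hdet
    simp at hdet
  set x' : ↥S := ⟨x, hx⟩ with hx'
  have h1 : aeval x p = S.val (aeval x' p) := aeval_algHom_apply S.val x' p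
  have h0 : aeval x' p = 0 := by
    apply Subtype.ext
    have h2 : aeval x p = 0 := x.aeval_self_charpoly
    rw [h2] at h1
    exact h1.symm
  have hXd : X * p.divX + C (p.coeff 0) = p := Polynomial.X_mul_divX_add p
  have h3 := congrArg (aeval x') hXd
  rw [map_add, _root_.map_mul, aeval_X, aeval_C, h0] at h3
  have h4 : x' * aeval x' p.divX = -(algebraMap ℂ ↥S (p.coeff 0)) :=
    eq_neg_of_add_eq_zero_left h3
  have key : x' * ((-(p.coeff 0)⁻¹) • aeval x' p.divX) = 1 := by
    rw [mul_smul_comm, h4, Algebra.algebraMap_eq_smul_one, smul_neg, neg_smul, neg_neg,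
      smul_smul, inv_mul_cancel₀ hc, one_smul]
  refine ⟨⟨x', (-(p.coeff 0)⁻¹) • aeval x' p.divX, key, ?_⟩, rfl⟩
  rw [hS]; exact key

private lemma aux_finite_nonunit {d : ℕ} (N : Matrix (Fin d) (Fin d) ℂ) :
    {t : ℂ | ¬ IsUnit ((1 : Matrix (Fin d) (Fin d) ℂ) + t • N)}.Finite := by
  classical
  set P : ℂ[X] := Matrix.det ((1 : Matrix (Fin d) (Fin d) ℂ[X]) + (X : ℂ[X]) • N.map C) with hP
  have heval : ∀ t : ℂ, eval t P = ((1 : Matrix (Fin d) (Fin d) ℂ) + t • N).det := by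
    intro t
    have h1 : eval t P = (((1 : Matrix (Fin d) (Fin d) ℂ[X]) + (X : ℂ[X]) • N.map C).map
        (evalRingHom t)).det := by
      rw [hP]; exact RingHom.map_det (evalRingHom t) _
    rw [h1]
    congr 1
    ext i j
    simp only [Matrix.map_apply, Matrix.add_apply, Matrix.smul_apply, Matrix.one_apply,
      smul_eq_mul, coe_evalRingHom, eval_add, eval_mul, eval_X, eval_C, apply_ite (eval t),
      eval_one, eval_zero, mul_comm]
  have hP0 : P ≠ 0 := by
    intro h
    have := heval 0
    rw [h] at this
    simp at this
  refine (Polynomial.finite_setOf_isRoot hP0).subset ?_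
  intro t ht
  simp only [Set.mem_setOf_eq] at ht ⊢
  have : ¬ IsUnit ((1 : Matrix (Fin d) (Fin d) ℂ) + t • N).det := by
    intro h; exact ht ((Matrix.isUnit_iff_isUnit_det _).mpr h)
  rw [isUnit_iff_ne_zero, not_not] at this
  rw [IsRoot, heval t, this]

private lemma aux_exists_log {d : ℕ} (S : Subalgebra ℂ (Matrix (Fin d) (Fin d) ℂ))
    (hS : ∀ a b : ↥S, a * b = b * a) {B : Matrix (Fin d) (Fin d) ℂ}
    (hB : B ∈ S) (hU : IsUnit B) : ∃ L ∈ S, exp L = B := by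
  letI : SeminormedRing (Matrix (Fin d) (Fin d) ℂ) := Matrix.linftyOpSemiNormedRing
  letI : NormedRing (Matrix (Fin d) (Fin d) ℂ) := Matrix.linftyOpNormedRing
  letI : NormedAlgebra ℂ (Matrix (Fin d) (Fin d) ℂ) := Matrix.linftyOpNormedAlgebra
  haveI : CompleteSpace (Matrix (Fin d) (Fin d) ℂ) := FiniteDimensional.complete ℂ _
  haveI : FiniteDimensional ℂ ↥S := inferInstanceAs (FiniteDimensional ℂ ↥S.toSubmodule)
  haveI : IsUniformAddGroup ↥S := SeminormedAddCommGroup.to_isUniformAddGroup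
  haveI : IsTopologicalRing ↥S := IsTopologicalSemiring.toIsTopologicalRing inferInstance
  haveI : CompleteSpace ↥S := FiniteDimensional.complete ℂ _
  letI : NormedAlgebra ℚ ↥S := NormedAlgebra.restrictScalars ℚ ℂ ↥S
  -- the exponential image in ↥S
  set Im : Set ↥S := Set.range (exp : ↥S → ↥S) with hIm
  set U : Set ↥S := {u | IsUnit u} with hU'
  have hcomm : ∀ a b : ↥S, Commute a b := fun a b => hS a b
  have hexp_mul : ∀ a b : ↥S, exp a * exp b = exp (a + b) := fun a b =>
    (exp_add_of_commute (hcomm a b)).symm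
  have hIm_unit : ∀ y ∈ Im, IsUnit y := by
    rintro y ⟨a, rfl⟩; exact isUnit_exp a
  have hIm1 : Im ∈ 𝓝 (1 : ↥S) := by
    have h := hasStrictFDerivAt_exp_zero (𝕂 := ℂ) (𝔸 := ↥S)
    have h' : HasStrictFDerivAt (exp : ↥S → ↥S)
        ((ContinuousLinearEquiv.refl ℂ ↥S : ↥S ≃L[ℂ] ↥S) : ↥S →L[ℂ] ↥S) 0 := by
      exact h
    have hmap := h'.map_nhds_eq_of_equiv
    rw [exp_zero] at hmap
    exact (Filter.ext_iff.mp hmap Im).mp Filter.range_mem_map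
  -- left multiplication by a unit is an open map
  have hmul_nhds : ∀ u : ↥S, IsUnit u → ∀ s ∈ 𝓝 (1 : ↥S), (fun y => u * y) '' s ∈ 𝓝 u := by
    rintro u ⟨w, rfl⟩ s hs
    have hopen : IsOpenMap fun y : ↥S => (w : ↥S) * y :=
      Homeomorph.isOpenMap
        { toFun := fun y => (w : ↥S) * y
          invFun := fun y => ((w⁻¹ : (↥S)ˣ) : ↥S) * y
          left_inv := fun y => by simp [← mul_assoc]
          right_inv := fun y => by simp [← mul_assoc]
          continuous_toFun := continuous_const.mul continuous_id
          continuous_invFun := continuous_const.mul continuous_id }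
    have := hopen.image_mem_nhds hs
    simpa using this
  have hIm_open : IsOpen Im := by
    rw [isOpen_iff_mem_nhds]
    rintro y ⟨a, rfl⟩
    refine Filter.mem_of_superset (hmul_nhds (exp a) (isUnit_exp a) Im hIm1) ?_
    rintro z ⟨m, ⟨b, rfl⟩, rfl⟩
    exact ⟨a + b, (hexp_mul a b).symm⟩
  have hV_open : IsOpen (U \ Im) := by
    rw [isOpen_iff_mem_nhds]
    rintro y ⟨hyU, hyIm⟩
    refine Filter.mem_of_superset (hmul_nhds y hyU Im hIm1) ?_
    rintro z ⟨m, ⟨b, rfl⟩, rfl⟩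
    refine ⟨hyU.mul (isUnit_exp b), ?_⟩
    rintro ⟨c, hc⟩
    apply hyIm
    refine ⟨c + (-b), ?_⟩
    rw [← hexp_mul, hc, mul_assoc, hexp_mul, add_neg_cancel, exp_zero, mul_one]
  -- U is path connected
  have hU_join : ∀ u : ↥S, IsUnit u → JoinedIn U 1 u := by
    intro u hu
    set N : Matrix (Fin d) (Fin d) ℂ := (u : Matrix (Fin d) (Fin d) ℂ) - 1 with hN
    set c : ℂ → ↥S := fun t => (1 : ↥S) + t • (u - 1) with hc
    have hcont : Continuous c := by continuity
    have hcval : ∀ t, ((c t : ↥S) : Matrix (Fin d) (Fin d) ℂ) = 1 + t • N := by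
      intro t; simp [hc, hN]
    have hZ : {t : ℂ | ¬ IsUnit (c t)}.Finite := by
      refine (aux_finite_nonunit N).subset ?_
      intro t ht
      simp only [Set.mem_setOf_eq] at ht ⊢
      intro hunit
      apply ht
      have h5 : IsUnit ((c t : ↥S) : Matrix (Fin d) (Fin d) ℂ) := by
        rw [hcval t]; exact hunit
      have h6 := aux_isUnit_mem hS (c t).2 h5
      simpa using h6
    have hrank : (1 : Cardinal) < Module.rank ℝ ℂ := by
      rw [Complex.rank_real_complex]; norm_num
    have hpc : IsPathConnected ({t : ℂ | ¬ IsUnit (c t)}ᶜ) :=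
      hZ.countable.isPathConnected_compl_of_one_lt_rank hrank
    have h0mem : (0 : ℂ) ∈ {t : ℂ | ¬ IsUnit (c t)}ᶜ := by
      simp only [Set.mem_compl_iff, Set.mem_setOf_eq, not_not]
      simpa [hc] using isUnit_one (M := ↥S)
    have h1mem : (1 : ℂ) ∈ {t : ℂ | ¬ IsUnit (c t)}ᶜ := by
      simp only [Set.mem_compl_iff, Set.mem_setOf_eq, not_not]
      have : c 1 = u := by simp [hc]
      rw [this]; exact hu
    have hjoin : JoinedIn ({t : ℂ | ¬ IsUnit (c t)}ᶜ) 0 1 := hpc.joinedIn 0 h0mem 1 h1mem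
    have hsubU : c '' {t | ¬IsUnit (c t)}ᶜ ⊆ U := by
      rintro y ⟨t, ht, rfl⟩
      exact not_not.mp ht
    have hj2 := (hjoin.map hcont).mono hsubU
    have hc0 : c 0 = 1 := by simp [hc]
    have hc1 : c 1 = u := by simp [hc]
    rwa [hc0, hc1] at hj2
  have hU_pre : IsPreconnected U := by
    have : IsPathConnected U := ⟨1, isUnit_one, fun {y} hy => hU_join y hy⟩
    exact this.isConnected.isPreconnected
  -- conclude U ⊆ Im
  have hsub : U ⊆ Im := by
    by_contra hns
    obtain ⟨x, hxU, hxIm⟩ := Set.not_subset.mp hns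
    have h1 : (U ∩ Im).Nonempty := ⟨1, isUnit_one, 0, exp_zero⟩
    have h2 : (U ∩ (U \ Im)).Nonempty := ⟨x, hxU, hxU, hxIm⟩
    have := hU_pre Im (U \ Im) hIm_open hV_open
      (fun x hx => by by_cases h : x ∈ Im; exact Or.inl h; exact Or.inr ⟨hx, h⟩) h1 h2
    obtain ⟨x, -, hxIm, -, hxnIm⟩ := this
    exact hxnIm hxIm
  -- transfer back
  have hBunit : IsUnit (⟨B, hB⟩ : ↥S) := aux_isUnit_mem hS hB hU
  obtain ⟨L', hL'⟩ := hsub hBunit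
  refine ⟨(L' : Matrix (Fin d) (Fin d) ℂ), L'.2, ?_⟩
  have := map_exp S.val continuous_subtype_val L'
  exact this.symm.trans (congrArg S.val hL')

/-- Given pairwise commuting invertible `d×d` complex matrices `A₁,…,Aₙ`, there is an entire
homomorphism `v : ℂⁿ → GL_d(ℂ)` with `v(0) = I`, `v(eⱼ) = Aⱼ`, and `v(z+z') = v(z)v(z')`. -/
theorem entire_homomorphism_through_matrices (n d : ℕ)
    (A : Fin n → Matrix (Fin d) (Fin d) ℂ)
    (hcomm : ∀ i j, A i * A j = A j * A i)
    (hinv : ∀ j, IsUnit (A j)) :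
    ∃ v : (Fin n → ℂ) → Matrix (Fin d) (Fin d) ℂ,
      (∀ i j : Fin d, Differentiable ℂ fun z => v z i j) ∧
      (∀ z, IsUnit (v z)) ∧
      v 0 = 1 ∧
      (∀ j : Fin n, v (Pi.single j 1) = A j) ∧
      ∀ z z', v (z + z') = v z * v z' := by
  classical
  set S := Algebra.adjoin ℂ (Set.range A) with hSdef
  have h1 : S ≤ Subalgebra.centralizer ℂ (Set.range A) := by
    rw [hSdef]
    apply Algebra.adjoin_le
    rintro x ⟨i, rfl⟩
    rw [SetLike.mem_coe, Subalgebra.mem_centralizer_iff]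
    rintro y ⟨j, rfl⟩
    exact hcomm j i
  have key : ∀ x ∈ S, ∀ y ∈ S, x * y = y * x := by
    have h2 : S ≤ Subalgebra.centralizer ℂ (S : Set (Matrix (Fin d) (Fin d) ℂ)) := by
      rw [hSdef]
      apply Algebra.adjoin_le
      rintro z ⟨i, rfl⟩
      rw [SetLike.mem_coe, Subalgebra.mem_centralizer_iff]
      intro y hy
      exact ((Subalgebra.mem_centralizer_iff ℂ).mp (h1 hy) (A i) ⟨i, rfl⟩).symm
    intro x hx y hy
    exact (Subalgebra.mem_centralizer_iff ℂ).mp (h2 hy) x hx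
  have hS : ∀ a b : ↥S, a * b = b * a := fun a b => Subtype.ext (key _ a.2 _ b.2)
  have hmemA : ∀ j, A j ∈ S := fun j => Algebra.subset_adjoin ⟨j, rfl⟩
  have hlog : ∀ j, ∃ L ∈ S, exp L = A j := fun j =>
    aux_exists_log S hS (hmemA j) (hinv j)
  choose L hLmem hLexp using hlog
  refine ⟨fun z => exp (∑ i, z i • L i), ?_, ?_, ?_, ?_, ?_⟩
  · -- differentiability
    intro i j
    letI : SeminormedRing (Matrix (Fin d) (Fin d) ℂ) := Matrix.linftyOpSemiNormedRing
    letI : NormedRing (Matrix (Fin d) (Fin d) ℂ) := Matrix.linftyOpNormedRing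
    letI : NormedAlgebra ℂ (Matrix (Fin d) (Fin d) ℂ) := Matrix.linftyOpNormedAlgebra
    haveI : CompleteSpace (Matrix (Fin d) (Fin d) ℂ) := FiniteDimensional.complete ℂ _
    have hg : Differentiable ℂ (fun z : Fin n → ℂ => ∑ k, z k • L k) := by
      apply Differentiable.fun_sum
      intro k _
      exact ((ContinuousLinearMap.proj (R := ℂ) (φ := fun _ : Fin n => ℂ)
        k).differentiable).smul_const (L k)
    have hexp : Differentiable ℂ (exp : Matrix (Fin d) (Fin d) ℂ → Matrix (Fin d) (Fin d) ℂ) :=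
      fun x => (exp_analytic (𝕂 := ℂ) x).differentiableAt
    have hl : Differentiable ℂ (fun M : Matrix (Fin d) (Fin d) ℂ => M i j) := by
      let l : Matrix (Fin d) (Fin d) ℂ →ₗ[ℂ] ℂ :=
        { toFun := fun M => M i j, map_add' := fun _ _ => rfl, map_smul' := fun _ _ => rfl }
      exact l.toContinuousLinearMap.differentiable
    exact hl.comp (hexp.comp hg)
  · -- units
    intro z
    exact Matrix.isUnit_exp _
  · -- v 0 = 1
    simp
  · -- basis vectors
    intro j
    have hsum : ∑ i, (Pi.single j (1:ℂ) : Fin n → ℂ) i • L i = L j := by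
      rw [Finset.sum_eq_single j]
      · simp
      · intro b _ hb
        simp [Pi.single_eq_of_ne hb]
      · simp
    show exp (∑ i, (Pi.single j (1:ℂ) : Fin n → ℂ) i • L i) = A j
    rw [hsum, hLexp]
  · -- homomorphism
    intro z z'
    have hsum : ∑ i, (z + z') i • L i = (∑ i, z i • L i) + (∑ i, z' i • L i) := by
      rw [← Finset.sum_add_distrib]
      exact Finset.sum_congr rfl fun i _ => by rw [Pi.add_apply, add_smul]
    show exp (∑ i, (z + z') i • L i) = exp (∑ i, z i • L i) * exp (∑ i, z' i • L i)
    rw [hsum]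
    refine Matrix.exp_add_of_commute _ _ ?_
    exact key _ (Subalgebra.sum_mem S fun i _ => S.smul_mem (hLmem i) _)
      _ (Subalgebra.sum_mem S fun i _ => S.smul_mem (hLmem i) _)
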